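/- Let G be a bipartite graph with bipartition V₁ ∪ V₂. There exists a nonempty set D₀ entirely contained in V₁ or entirely contained in V₂ such that |D₀ ∪ Odd(D₀)| = δ_loc(G) + 1, i.e., D₀ achieves the minimum in the characterization of the local minimum degree. -/
import Mathlib


/-- Odd neighborhood. -/
def oddNbhd {V : Type*} (G : SimpleGraph V) (D : Set V) : Set V :=
  {v | Odd ((G.neighborSet v ∩ D).ncard)}

/-- Local minimum degree: `min{ |D ∪ Odd(D)| : ∅ ≠ D ⊆ V } − 1`. -/
noncomputable def deltaLoc {V : Type*} (G : SimpleGraph V) : ℕ :=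
  sInf {k : ℕ | ∃ D : Set V, D.Nonempty ∧ (D ∪ oddNbhd G D).ncard = k} - 1

lemma key_subset {V : Type*} (G : SimpleGraph V) (V₁ V₂ : Set V)
    (hdisj : V₁ ∩ V₂ = ∅)
    (hbip : ∀ v w, G.Adj v w → (v ∈ V₁ ∧ w ∈ V₂) ∨ (v ∈ V₂ ∧ w ∈ V₁))
    (D : Set V) :
    (D ∩ V₁) ∪ oddNbhd G (D ∩ V₁) ⊆ D ∪ oddNbhd G D := by
  intro v hv
  rcases hv with hv | hv
  · exact Or.inl hv.1
  · -- v has odd number of neighbors in D ∩ V₁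
    have hne : (G.neighborSet v ∩ (D ∩ V₁)).Nonempty := by
      apply Set.nonempty_of_ncard_ne_zero
      intro h0
      simp only [oddNbhd, Set.mem_setOf_eq, h0] at hv
      exact (Nat.not_odd_iff_even.mpr Even.zero) hv
    obtain ⟨w, hwN, hwD, hwV₁⟩ := hne
    -- v ∈ V₂
    have hv2 : v ∈ V₂ := by
      rcases hbip v w hwN with ⟨_, hw2⟩ | ⟨h2, _⟩
      · exact absurd (Set.mem_inter hwV₁ hw2) (by simp [hdisj])
      · exact h2
    -- neighbors of v are all in V₁
    have hN : G.neighborSet v ∩ D = G.neighborSet v ∩ (D ∩ V₁) := by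
      ext u
      constructor
      · rintro ⟨hu, huD⟩
        refine ⟨hu, huD, ?_⟩
        rcases hbip v u hu with ⟨h1, _⟩ | ⟨_, h1⟩
        · exact absurd (Set.mem_inter h1 hv2) (by simp [hdisj])
        · exact h1
      · rintro ⟨hu, huD, _⟩
        exact ⟨hu, huD⟩
    right
    show Odd ((G.neighborSet v ∩ D).ncard)
    rw [hN]
    exact hv

theorem bipartite_deltaLoc_achieved {V : Type*} [Fintype V] [Nonempty V]
    (G : SimpleGraph V) (V₁ V₂ : Set V)
    (hcover : V₁ ∪ V₂ = Set.univ) (hdisj : V₁ ∩ V₂ = ∅)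
    (hbip : ∀ v w, G.Adj v w → (v ∈ V₁ ∧ w ∈ V₂) ∨ (v ∈ V₂ ∧ w ∈ V₁)) :
    ∃ D₀ : Set V, D₀.Nonempty ∧ (D₀ ⊆ V₁ ∨ D₀ ⊆ V₂) ∧
      (D₀ ∪ oddNbhd G D₀).ncard = deltaLoc G + 1 := by
  set S : Set ℕ := {k : ℕ | ∃ D : Set V, D.Nonempty ∧ (D ∪ oddNbhd G D).ncard = k} with hS
  have hSne : S.Nonempty := ⟨_, Set.univ, Set.univ_nonempty, rfl⟩
  have hm : sInf S ∈ S := Nat.sInf_mem hSne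
  obtain ⟨D, hDne, hDcard⟩ := hm
  have hmpos : 0 < sInf S := by
    rw [← hDcard]
    exact (Set.ncard_pos (Set.toFinite _)).mpr (hDne.mono Set.subset_union_left)
  have hdelta : deltaLoc G + 1 = sInf S := by
    unfold deltaLoc
    rw [← hS]
    omega
  -- symmetric bipartite hypothesis
  have hbip' : ∀ v w, G.Adj v w → (v ∈ V₂ ∧ w ∈ V₁) ∨ (v ∈ V₁ ∧ w ∈ V₂) :=
    fun v w h => (hbip v w h).symm
  have hdisj' : V₂ ∩ V₁ = ∅ := by rw [Set.inter_comm]; exact hdisj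
  -- helper to finish given a nonempty piece
  have finish : ∀ E : Set V, E.Nonempty →
      (E ∪ oddNbhd G E ⊆ D ∪ oddNbhd G D) →
      (E ∪ oddNbhd G E).ncard = deltaLoc G + 1 := by
    intro E hEne hsub
    have hle : (E ∪ oddNbhd G E).ncard ≤ sInf S := by
      rw [← hDcard]
      exact Set.ncard_le_ncard hsub (Set.toFinite _)
    have hge : sInf S ≤ (E ∪ oddNbhd G E).ncard :=
      Nat.sInf_le ⟨E, hEne, rfl⟩
    omega
  by_cases h1 : (D ∩ V₁).Nonempty
  · exact ⟨D ∩ V₁, h1, Or.inl Set.inter_subset_right,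
      finish _ h1 (key_subset G V₁ V₂ hdisj hbip D)⟩
  · have h2 : (D ∩ V₂).Nonempty := by
      obtain ⟨x, hx⟩ := hDne
      have : x ∈ V₁ ∪ V₂ := hcover ▸ Set.mem_univ x
      rcases this with hx1 | hx2
      · exact absurd ⟨x, hx, hx1⟩ h1
      · exact ⟨x, hx, hx2⟩
    exact ⟨D ∩ V₂, h2, Or.inr Set.inter_subset_right,
      finish _ h2 (key_subset G V₂ V₁ hdisj' hbip' D)⟩
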